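/- Let p be an odd prime, let Z be a ternary quadratic-residue array of size p×p, and let s, t be real numbers with -1/2 < s, t ≤ 1/2. Then ∑_{0≤i,j<p} |Z_{s,t}(ε_i, ε_j)|⁴ = p⁴(p² - 1), where Z_{s,t}(x,y) denotes the generating function of the rotated array Z_{s,t} and ε_j = e^{2πij/p}. -/

import Mathlib

open scoped BigOperators

noncomputable section

/-- `A` is an array of size `n × m`: entries vanish outside `[0,n) × [0,m)`. -/
def IsArray (n m : ℤ) (A : ℤ × ℤ → ℝ) : Prop :=
  ∀ i j : ℤ, A (i, j) ≠ 0 → 0 ≤ i ∧ i < n ∧ 0 ≤ j ∧ j < m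

/-- `A` is a binary array of size `n × m`. -/
def IsBinaryArray (n m : ℤ) (A : ℤ × ℤ → ℝ) : Prop :=
  IsArray n m A ∧
    ∀ i j : ℤ, 0 ≤ i → i < n → 0 ≤ j → j < m → A (i, j) = 1 ∨ A (i, j) = -1

/-- Aperiodic autocorrelation of a two-dimensional array at displacement `(u, v)`. -/
def autocorr (A : ℤ × ℤ → ℝ) (u v : ℤ) : ℝ :=
  ∑ᶠ i : ℤ, ∑ᶠ j : ℤ, A (i, j) * A (i + u, j + v)

/-- Merit factor of an array of size `n × m`. -/
def meritFactor (n m : ℤ) (A : ℤ × ℤ → ℝ) : ℝ :=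
  ((n : ℝ) * m) ^ 2 / ∑ᶠ uv ∈ {x : ℤ × ℤ | x ≠ (0, 0)}, (autocorr A uv.1 uv.2) ^ 2

/-- `a` is a sequence of length `n`: entries vanish outside `[0,n)`. -/
def IsSeq (n : ℤ) (a : ℤ → ℝ) : Prop := ∀ i : ℤ, a i ≠ 0 → 0 ≤ i ∧ i < n

/-- `a` is a binary sequence of length `n`. -/
def IsBinarySeq (n : ℤ) (a : ℤ → ℝ) : Prop :=
  IsSeq n a ∧ ∀ i : ℤ, 0 ≤ i → i < n → a i = 1 ∨ a i = -1

/-- Aperiodic autocorrelation of a sequence at displacement `u`. -/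
def seqAutocorr (a : ℤ → ℝ) (u : ℤ) : ℝ := ∑ᶠ i : ℤ, a i * a (i + u)

/-- Merit factor of a sequence of length `n`. -/
def seqMeritFactor (n : ℤ) (a : ℤ → ℝ) : ℝ :=
  (n : ℝ) ^ 2 / ∑ᶠ u ∈ {u : ℤ | u ≠ 0}, (seqAutocorr a u) ^ 2

/-- Rotation of a sequence of length `n` by a real number `s`. -/
def seqRotate (n : ℤ) (s : ℝ) (a : ℤ → ℝ) : ℤ → ℝ :=
  fun i => if 0 ≤ i ∧ i < n then a ((i + ⌊(n : ℝ) * s⌋) % n) else 0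

/-- Rotation of an array of size `n × m` by real numbers `s` and `t`. -/
def arrRotate (n m : ℤ) (s t : ℝ) (A : ℤ × ℤ → ℝ) : ℤ × ℤ → ℝ :=
  fun x => if 0 ≤ x.1 ∧ x.1 < n ∧ 0 ≤ x.2 ∧ x.2 < m then
    A ((x.1 + ⌊(n : ℝ) * s⌋) % n, (x.2 + ⌊(m : ℝ) * t⌋) % m) else 0

/-- Generating function of an array of size `n × m`, evaluated at `(x, y)`. -/
def genFun (n m : ℕ) (A : ℤ × ℤ → ℝ) (x y : ℂ) : ℂ :=
  ∑ i ∈ Finset.range n, ∑ j ∈ Finset.range m, (A (i, j) : ℂ) * x ^ i * y ^ j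

/-- `zeta d = e^{iπ/d}`, a primitive `(2d)`-th root of unity. -/
def zeta (d : ℕ) : ℂ := Complex.exp (Real.pi * Complex.I / d)

/-- `eps p j = e^{2πij/p}`, a `p`-th root of unity. -/
def eps (p : ℕ) (j : ℤ) : ℂ := Complex.exp (2 * Real.pi * Complex.I * j / p)

/-- The Legendre sequence of length `p` (for `p` an odd prime). -/
def legendreSeq (p : ℕ) : ℤ → ℝ :=
  fun i => if 0 ≤ i ∧ i < p then (if i = 0 then 1 else (jacobiSym i p : ℝ)) else 0

/-- The ternary Legendre sequence of length `p` (for `p` an odd prime). -/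
def ternaryLegendreSeq (p : ℕ) : ℤ → ℝ :=
  fun i => if 0 ≤ i ∧ i < p then (jacobiSym i p : ℝ) else 0

open Classical in
/-- The quadratic character of `GF(p²)`. -/
def quadChar (p : ℕ) [Fact p.Prime] (a : GaloisField p 2) : ℝ :=
  if a = 0 then 0 else if IsSquare a then 1 else -1

open Classical in
/-- The ternary quadratic-residue array of size `p × p` associated with the basis `B`
of `GF(p²)` over `GF(p)`. -/
def qrArray (p : ℕ) [Fact p.Prime]
    (B : Module.Basis (Fin 2) (ZMod p) (GaloisField p 2)) : ℤ × ℤ → ℝ :=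
  fun x => if 0 ≤ x.1 ∧ x.1 < p ∧ 0 ≤ x.2 ∧ x.2 < p then
    quadChar p ((x.1 : ZMod p) • B 0 + (x.2 : ZMod p) • B 1) else 0


/-! ### Auxiliary machinery for `stmt15` -/

set_option maxHeartbeats 1000000 in
set_option linter.unusedSectionVars false in
instance galoisFieldFintype (p n : ℕ) [Fact p.Prime] : Fintype (GaloisField p n) :=
  Fintype.ofFinite _

section Stmt15Aux

set_option linter.unusedSectionVars false

variable (p : ℕ) [Fact p.Prime]

lemma aux_eps_one_eq : eps p 1 = Complex.exp (2 * Real.pi * Complex.I / p) := by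
  simp [eps]

lemma aux_eps_prim : IsPrimitiveRoot (eps p 1) p := by
  rw [aux_eps_one_eq]
  exact Complex.isPrimitiveRoot_exp p (Fact.out : p.Prime).ne_zero

lemma aux_eps_pow_p : eps p 1 ^ p = 1 := (aux_eps_prim p).pow_eq_one

/-- The additive character `x ↦ e^{2πi x/p}` of `ZMod p`. -/
def Echar : AddChar (ZMod p) ℂ := AddChar.zmodChar p (aux_eps_pow_p p)

lemma Echar_apply (x : ZMod p) : Echar p x = eps p 1 ^ x.val :=
  AddChar.zmodChar_apply _ _

lemma Echar_natCast (n : ℕ) : Echar p (n : ZMod p) = eps p 1 ^ n :=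
  AddChar.zmodChar_apply' _ _

lemma aux_eps_nat (a : ℕ) : eps p a = eps p 1 ^ a := by
  rw [eps, aux_eps_one_eq, ← Complex.exp_nat_mul]
  rw [mul_comm (a : ℂ)]
  congr 1
  field_simp
  rw [Int.cast_natCast]

lemma eps_pow_eq_Echar (a i : ℕ) : eps p a ^ i = Echar p ((a : ZMod p) * (i : ZMod p)) := by
  have h : ((a : ZMod p) * (i : ZMod p)) = ((a * i : ℕ) : ZMod p) := by push_cast; ring
  rw [h, Echar_natCast, aux_eps_nat, ← pow_mul]

lemma abs_Echar (x : ZMod p) : ‖Echar p x‖ = 1 := by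
  rw [Echar_apply, norm_pow, aux_eps_one_eq, Complex.norm_exp]
  norm_num [Complex.div_re]

lemma Echar_eq_one_iff (x : ZMod p) : Echar p x = 1 ↔ x = 0 := by
  constructor
  · intro h
    rw [Echar_apply] at h
    have hd := ((aux_eps_prim p).pow_eq_one_iff_dvd x.val).mp h
    have hlt := ZMod.val_lt x
    exact (ZMod.val_eq_zero x).mp (Nat.eq_zero_of_dvd_of_lt hd hlt)
  · rintro rfl; exact AddChar.map_zero_eq_one _

lemma Echar_neg_mul (u : ZMod p) : Echar p (-u) * Echar p u = 1 := by
  rw [← AddChar.map_add_eq_mul]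
  simp

open Classical in
/-- The quadratic character of `GF(p²)` with values in `ℂ`. -/
def myChi : MulChar (GaloisField p 2) ℂ :=
  (quadraticChar (GaloisField p 2)).ringHomComp (Int.castRingHom ℂ)

lemma myChi_eq (a : GaloisField p 2) : myChi p a = (quadChar p a : ℂ) := by
  classical
  rw [quadChar]
  show ((quadraticChar (GaloisField p 2) a : ℤ) : ℂ) = _
  rw [quadraticChar_apply, quadraticCharFun]
  split_ifs <;> simp

lemma aux_ringChar_ne_two (hodd : Odd p) : ringChar (GaloisField p 2) ≠ 2 := by
  rw [ringChar.eq (GaloisField p 2) p]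
  intro h; rw [h] at hodd
  exact (Nat.not_odd_iff_even.mpr (by norm_num)) hodd

lemma myChi_ne_one (hodd : Odd p) : myChi p ≠ 1 := by
  classical
  exact fun h => quadraticChar_ne_one (aux_ringChar_ne_two p hodd)
    ((MulChar.ringHomComp_eq_one_iff Int.cast_injective).mp h)

lemma myChi_quadratic : (myChi p).IsQuadratic := by
  classical
  exact (quadraticChar_isQuadratic (GaloisField p 2)).comp _

lemma conj_psi_aux (ψ : AddChar (GaloisField p 2) ℂ) (z : GaloisField p 2) :
    (starRingEnd ℂ) (ψ z) = ψ⁻¹ z := by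
  have hpow : ψ z ^ p = 1 := by
    rw [← AddChar.map_nsmul_eq_pow]
    have h : (p : ℕ) • z = 0 := by
      simp [nsmul_eq_mul, CharP.cast_eq_zero (GaloisField p 2) p]
    rw [h, AddChar.map_zero_eq_one]
  have habs : ‖ψ z‖ = 1 :=
    Complex.norm_eq_one_of_pow_eq_one hpow (Fact.out : p.Prime).ne_zero
  rw [AddChar.inv_apply', Complex.inv_def, Complex.normSq_eq_norm_sq,
    habs]
  simp

lemma conj_chi (z : GaloisField p 2) : (starRingEnd ℂ) (myChi p z) = myChi p z := by
  classical
  show (starRingEnd ℂ) ((quadraticChar (GaloisField p 2) z : ℤ) : ℂ) = _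
  rw [map_intCast]
  rfl

lemma abs_gauss (hodd : Odd p) (ψ : AddChar (GaloisField p 2) ℂ) (hψ : ψ ≠ 1) :
    ‖gaussSum (myChi p) ψ‖ ^ 2 = (p : ℝ) ^ 2 := by
  have hprim : ψ.IsPrimitive := AddChar.IsPrimitive.of_ne_one hψ
  have hcard : (Fintype.card (GaloisField p 2) : ℂ) = (p : ℂ) ^ 2 := by
    rw [← Nat.card_eq_fintype_card, GaloisField.card p 2 (by norm_num)]; push_cast; ring
  have hmul := gaussSum_mul_gaussSum_eq_card (R := GaloisField p 2) (myChi_ne_one p hodd) hprim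
  have hconj : (starRingEnd ℂ) (gaussSum (myChi p) ψ) = gaussSum (myChi p)⁻¹ ψ⁻¹ := by
    rw [gaussSum, map_sum, (myChi_quadratic p).inv]
    apply Finset.sum_congr rfl
    intro z _
    rw [map_mul, conj_chi, conj_psi_aux]
  have hthis : gaussSum (myChi p) ψ * (starRingEnd ℂ) (gaussSum (myChi p) ψ)
      = (((p : ℝ) ^ 2 : ℝ) : ℂ) := by
    rw [hconj, hmul, hcard]; push_cast; ring
  rw [Complex.mul_conj] at hthis
  rw [Complex.sq_norm]
  exact_mod_cast hthis

variable (B : Module.Basis (Fin 2) (ZMod p) (GaloisField p 2))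

/-- The additive character `z ↦ e^{2πi(a·c₀(z) + b·c₁(z))/p}` of `GF(p²)`. -/
def myPsi (a b : ZMod p) : AddChar (GaloisField p 2) ℂ :=
  (Echar p).compAddMonoidHom (a • B.coord 0 + b • B.coord 1).toAddMonoidHom

lemma myPsi_apply (a b : ZMod p) (z : GaloisField p 2) :
    myPsi p B a b z = Echar p (a * B.repr z 0 + b * B.repr z 1) := by
  simp [myPsi, Module.Basis.coord_apply, smul_eq_mul]

lemma myPsi_smul (a b c d : ZMod p) :
    myPsi p B a b (c • B 0 + d • B 1) = Echar p (a * c) * Echar p (b * d) := by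
  rw [myPsi_apply]
  have h0 : B.repr (c • B 0 + d • B 1) 0 = c := by
    simp [Module.Basis.repr_self, Finsupp.single_apply]
  have h1 : B.repr (c • B 0 + d • B 1) 1 = d := by
    simp [Module.Basis.repr_self, Finsupp.single_apply]
  rw [h0, h1, AddChar.map_add_eq_mul]

lemma myPsi_ne_one (a b : ZMod p) (h : ¬(a = 0 ∧ b = 0)) : myPsi p B a b ≠ 1 := by
  intro hone
  apply h
  have h1 : myPsi p B a b (B 0) = 1 := by rw [hone]; rfl
  have h2 : myPsi p B a b (B 1) = 1 := by rw [hone]; rfl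
  have e1 : myPsi p B a b (B 0) = Echar p a := by
    have := myPsi_smul p B a b 1 0; simpa using this
  have e2 : myPsi p B a b (B 1) = Echar p b := by
    have := myPsi_smul p B a b 0 1; simpa using this
  exact ⟨(Echar_eq_one_iff p a).mp (e1 ▸ h1), (Echar_eq_one_iff p b).mp (e2 ▸ h2)⟩

lemma myPsi_zero : myPsi p B 0 0 = 1 := by
  ext z
  rw [myPsi_apply]
  simpa using AddChar.map_zero_eq_one (Echar p)

lemma sum_range_zmod (f : ℕ → ℂ) :
    ∑ i ∈ Finset.range p, f i = ∑ c : ZMod p, f c.val := by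
  refine Finset.sum_nbij' (fun i => (i : ZMod p)) (fun c => c.val)
    (fun _ _ => Finset.mem_univ _)
    (fun c _ => Finset.mem_range.mpr (ZMod.val_lt c))
    (fun a ha => ZMod.val_natCast_of_lt (Finset.mem_range.mp ha))
    (fun c _ => ZMod.natCast_rightInverse c)
    (fun a ha => by rw [ZMod.val_natCast_of_lt (Finset.mem_range.mp ha)])

lemma qrArray_zmod (c d : ZMod p) :
    qrArray p B ((c.val : ℤ), (d.val : ℤ)) = quadChar p (c • B 0 + d • B 1) := by
  rw [qrArray, if_pos]
  · congr 2 <;> simp [ZMod.natCast_val, ZMod.cast_id]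
  · exact ⟨Int.ofNat_nonneg _, show (c.val : ℤ) < (p : ℤ) by exact_mod_cast ZMod.val_lt c,
      Int.ofNat_nonneg _, show (d.val : ℤ) < (p : ℤ) by exact_mod_cast ZMod.val_lt d⟩

/-- The coordinate equivalence `(ZMod p)² ≃ GF(p²)` given by the basis `B`. -/
def gEquiv : (ZMod p × ZMod p) ≃ GaloisField p 2 :=
  ((piFinTwoEquiv fun _ => ZMod p).symm.trans B.equivFun.symm.toEquiv)

lemma gEquiv_apply (c d : ZMod p) : gEquiv p B (c, d) = c • B 0 + d • B 1 := by
  simp [gEquiv, Module.Basis.equivFun_symm_apply, Fin.sum_univ_two]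

set_option maxHeartbeats 1000000 in
lemma genFun_rot (s t : ℝ) (a b : ℕ) :
    genFun p p (arrRotate p p s t (qrArray p B)) (eps p a) (eps p b)
      = Echar p (-((a : ZMod p) * ((⌊(p:ℝ)*s⌋ : ℤ) : ZMod p)))
          * Echar p (-((b : ZMod p) * ((⌊(p:ℝ)*t⌋ : ℤ) : ZMod p)))
          * gaussSum (myChi p) (myPsi p B a b) := by
  set σ : ℤ := ⌊(p:ℝ)*s⌋ with hσ
  set τ : ℤ := ⌊(p:ℝ)*t⌋ with hτ
  set σ' : ZMod p := (σ : ZMod p) with hσ'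
  set τ' : ZMod p := (τ : ZMod p) with hτ'
  set a' : ZMod p := (a : ZMod p) with ha'
  set b' : ZMod p := (b : ZMod p) with hb'
  have key : ∀ (c : ZMod p) (x : ℤ),
      ((c.val : ℤ) + x) % (p : ℤ) = (((c + (x : ZMod p)).val : ℕ) : ℤ) := by
    intro c x
    have h : c + (x : ZMod p) = (((c.val : ℤ) + x : ℤ) : ZMod p) := by
      push_cast [ZMod.natCast_val, ZMod.cast_id]; ring
    rw [h, ZMod.val_intCast]
  have step1 : genFun p p (arrRotate p p s t (qrArray p B)) (eps p a) (eps p b)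
      = ∑ c : ZMod p, ∑ d : ZMod p,
          ((qrArray p B ((((c + σ').val : ℕ) : ℤ), (((d + τ').val : ℕ) : ℤ)) : ℝ) : ℂ)
            * Echar p (a' * c) * Echar p (b' * d) := by
    rw [genFun, sum_range_zmod]
    refine Finset.sum_congr rfl fun c _ => ?_
    rw [sum_range_zmod]
    refine Finset.sum_congr rfl fun d _ => ?_
    rw [arrRotate, if_pos]
    · simp only [Int.cast_natCast]
      rw [show (⌊((p:ℝ)) * s⌋ : ℤ) = σ from rfl, show (⌊((p:ℝ)) * t⌋ : ℤ) = τ from rfl]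
      rw [key c σ, key d τ, eps_pow_eq_Echar, eps_pow_eq_Echar,
        show ((c.val : ℕ) : ZMod p) = c from ZMod.natCast_rightInverse c,
        show ((d.val : ℕ) : ZMod p) = d from ZMod.natCast_rightInverse d]
    · exact ⟨Int.ofNat_nonneg _, show (c.val : ℤ) < (p : ℤ) by exact_mod_cast ZMod.val_lt c,
        Int.ofNat_nonneg _, show (d.val : ℤ) < (p : ℤ) by exact_mod_cast ZMod.val_lt d⟩
  rw [step1]
  have step2 : ∀ c d : ZMod p,
      ((qrArray p B ((((c + σ').val : ℕ) : ℤ), (((d + τ').val : ℕ) : ℤ)) : ℝ) : ℂ)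
        = myChi p ((c + σ') • B 0 + (d + τ') • B 1) := by
    intro c d
    rw [qrArray_zmod, myChi_eq]
  simp only [step2]
  rw [← Fintype.sum_prod_type']
  rw [Fintype.sum_equiv ((Equiv.addRight σ').prodCongr (Equiv.addRight τ'))
    (fun cd : ZMod p × ZMod p =>
      myChi p ((cd.1 + σ') • B 0 + (cd.2 + τ') • B 1) * Echar p (a' * cd.1) * Echar p (b' * cd.2))
    (fun cd => Echar p (-(a' * σ')) * Echar p (-(b' * τ'))
      * (myChi p (gEquiv p B cd) * myPsi p B a' b' (gEquiv p B cd)))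
    (fun cd => by
      simp only [Equiv.prodCongr_apply, Equiv.coe_addRight, Prod.map]
      rw [show (gEquiv p B (cd.1 + σ', cd.2 + τ')) = (cd.1 + σ') • B 0 + (cd.2 + τ') • B 1
          from gEquiv_apply p B _ _]
      rw [myPsi_smul]
      rw [show a' * (cd.1 + σ') = a' * cd.1 + a' * σ' by ring,
        show b' * (cd.2 + τ') = b' * cd.2 + b' * τ' by ring,
        AddChar.map_add_eq_mul, AddChar.map_add_eq_mul]
      rw [show Echar p (-(a' * σ')) * Echar p (-(b' * τ'))
          * (myChi p ((cd.1 + σ') • B 0 + (cd.2 + τ') • B 1)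
            * (Echar p (a' * cd.1) * Echar p (a' * σ') * (Echar p (b' * cd.2) * Echar p (b' * τ'))))
          = (Echar p (-(a' * σ')) * Echar p (a' * σ')) * (Echar p (-(b' * τ')) * Echar p (b' * τ'))
            * (myChi p ((cd.1 + σ') • B 0 + (cd.2 + τ') • B 1)
              * Echar p (a' * cd.1) * Echar p (b' * cd.2)) by ring,
        Echar_neg_mul, Echar_neg_mul, one_mul, one_mul])]
  rw [← Finset.mul_sum, gaussSum, ← Equiv.sum_comp (gEquiv p B)
    (fun z => myChi p z * myPsi p B a' b' z)]

end Stmt15Aux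

/-- `∑_{0 ≤ i,j < p} |Z_{s,t}(ε_i, ε_j)|⁴ = p⁴(p² - 1)` for a rotated ternary
quadratic-residue array `Z` of size `p × p`. -/
theorem stmt15 (p : ℕ) [Fact p.Prime] (hodd : Odd p)
    (B : Module.Basis (Fin 2) (ZMod p) (GaloisField p 2)) (s t : ℝ)
    (hs1 : -(1/2) < s) (hs2 : s ≤ 1/2) (ht1 : -(1/2) < t) (ht2 : t ≤ 1/2) :
    ∑ i ∈ Finset.range p, ∑ j ∈ Finset.range p,
      ‖genFun p p (arrRotate p p s t (qrArray p B)) (eps p i) (eps p j)‖ ^ 4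
      = (p : ℝ) ^ 4 * ((p : ℝ) ^ 2 - 1) := by
  classical
  have hp : 0 < p := (Fact.out : p.Prime).pos
  have habs : ∀ i j : ℕ,
      ‖genFun p p (arrRotate p p s t (qrArray p B)) (eps p i) (eps p j)‖
        = ‖gaussSum (myChi p) (myPsi p B i j)‖ := by
    intro i j
    rw [genFun_rot p B s t i j, norm_mul, norm_mul, abs_Echar, abs_Echar, one_mul, one_mul]
  have hval : ∀ i ∈ Finset.range p, ∀ j ∈ Finset.range p,
      ‖genFun p p (arrRotate p p s t (qrArray p B)) (eps p i) (eps p j)‖ ^ 4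
        = (if i = 0 ∧ j = 0 then (0:ℝ) else (p:ℝ)^4) := by
    intro i hi j hj
    rw [habs i j]
    by_cases h : i = 0 ∧ j = 0
    · obtain ⟨rfl, rfl⟩ := h
      rw [if_pos ⟨rfl, rfl⟩]
      have h0 : gaussSum (myChi p) (myPsi p B ((0:ℕ) : ZMod p) ((0:ℕ) : ZMod p)) = 0 := by
        rw [Nat.cast_zero, myPsi_zero, gaussSum]
        simp only [AddChar.one_apply, mul_one]
        exact MulChar.sum_eq_zero_of_ne_one (myChi_ne_one p hodd)
      rw [h0, norm_zero]
      norm_num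
    · rw [if_neg h]
      have hne : ¬(((i:ℕ) : ZMod p) = 0 ∧ ((j:ℕ) : ZMod p) = 0) := by
        rintro ⟨h1, h2⟩
        apply h
        constructor
        · have := congrArg ZMod.val h1
          rwa [ZMod.val_natCast_of_lt (Finset.mem_range.mp hi), ZMod.val_zero] at this
        · have := congrArg ZMod.val h2
          rwa [ZMod.val_natCast_of_lt (Finset.mem_range.mp hj), ZMod.val_zero] at this
      have h2 := abs_gauss p hodd (myPsi p B i j) (myPsi_ne_one p B _ _ hne)
      calc ‖gaussSum (myChi p) (myPsi p B i j)‖ ^ 4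
          = (‖gaussSum (myChi p) (myPsi p B i j)‖ ^ 2) ^ 2 := by ring
        _ = ((p:ℝ)^2)^2 := by rw [h2]
        _ = (p:ℝ)^4 := by ring
  rw [Finset.sum_congr rfl (fun i hi => Finset.sum_congr rfl (fun j hj => hval i hi j hj))]
  have hmem : (0:ℕ) ∈ Finset.range p := Finset.mem_range.mpr hp
  have hrw : ∀ i j : ℕ, (if i = 0 ∧ j = 0 then (0:ℝ) else (p:ℝ)^4)
      = (p:ℝ)^4 - (if i = 0 then (if j = 0 then (p:ℝ)^4 else 0) else 0) := by
    intro i j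
    by_cases hi : i = 0 <;> by_cases hj : j = 0 <;> simp [hi, hj]
  simp only [hrw]
  rw [Finset.sum_congr rfl (fun i _ => Finset.sum_sub_distrib _ _)]
  rw [Finset.sum_sub_distrib]
  simp only [Finset.sum_const, Finset.card_range, nsmul_eq_mul]
  have h1 : ∀ i : ℕ, (∑ j ∈ Finset.range p, (if i = 0 then (if j = 0 then (p:ℝ)^4 else 0) else 0))
      = (if i = 0 then (p:ℝ)^4 else 0) := by
    intro i
    by_cases hi : i = 0
    · simp only [hi, if_true]
      rw [Finset.sum_ite_eq' (Finset.range p) 0 (fun _ => (p:ℝ)^4), if_pos hmem]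
    · simp [hi]
  rw [Finset.sum_congr rfl (fun i _ => h1 i),
    Finset.sum_ite_eq' (Finset.range p) 0 (fun _ => (p:ℝ)^4), if_pos hmem]
  ring
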